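/- arXiv:1611.01788 — 2 statements merged into one kernel-verified Lean document; each statement's English description precedes it below -/
import Mathlib

section
/- A subset S of Spec M (the set of prime ideals of a binoid M, with the Zariski topology whose closed sets are V(A) = {p : A ⊆ p}) is closed if and only if it is closed under supersets within Spec M (i.e. p ∈ S, q ∈ Spec M, p ⊆ q implies q ∈ S), and S is open if and only if it is closed under subsets within Spec M. -/
/-- A (commutative) binoid: a commutative additive monoid with an absorbing element `∞`. -/
class Binoid (M : Type*) extends AddCommMonoid M where
  infty : M
  add_infty : ∀ a : M, a + infty = infty

namespace Binoid

variable {M : Type*} [Binoid M]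

/-- `a` is a unit of the binoid `M`. -/
def IsUnitElem (a : M) : Prop := ∃ b : M, a + b = 0

/-- An ideal of a binoid. -/
def IsIdeal (I : Set M) : Prop := (infty : M) ∈ I ∧ ∀ a ∈ I, ∀ b : M, a + b ∈ I

/-- A prime ideal of a binoid: a proper ideal whose complement is closed under addition. -/
def IsPrimeIdeal (p : Set M) : Prop :=
  IsIdeal p ∧ p ≠ Set.univ ∧ ∀ a b : M, a + b ∈ p → a ∈ p ∨ b ∈ p

/-- The ideal `M₊ = M \ M*` of non-units. -/
def plusIdeal (M : Type*) [Binoid M] : Set M := {a : M | ¬ IsUnitElem a}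

/-- The ideal generated by a subset `S` of a binoid. -/
def genIdeal (S : Set M) : Set M :=
  {m : M | m = (infty : M) ∨ ∃ a ∈ S, ∃ b : M, m = a + b}

end Binoid


/-- `M` is finitely generated as a binoid. -/
def Binoid.IsFG (M : Type*) [Binoid M] : Prop :=
  ∃ s : Finset M, AddSubmonoid.closure (s : Set M) = ⊤

/-- The spectrum of a binoid: the set of its prime ideals. -/
def SpecB (M : Type*) [Binoid M] : Type _ := {p : Set M // Binoid.IsPrimeIdeal p}

open Binoid

section Aux

variable {M : Type*} [Binoid M]

lemma Binoid.zero_not_mem_prime {p : Set M} (hp : IsPrimeIdeal p) : (0 : M) ∉ p := by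
  intro h0
  apply hp.2.1
  ext b
  simp only [Set.mem_univ, iff_true]
  have := hp.1.2 0 h0 b
  rwa [zero_add] at this

lemma Binoid.sum_mem_prime {p : Set M} (hp : IsPrimeIdeal p) {ι : Type*} (T : Finset ι)
    (f : ι → M) (h : ∑ i ∈ T, f i ∈ p) : ∃ i ∈ T, f i ∈ p := by
  classical
  induction T using Finset.induction with
  | empty =>
    simp only [Finset.sum_empty] at h
    exact absurd h (Binoid.zero_not_mem_prime hp)
  | insert _ _ hx ih =>
    rename_i a T
    rw [Finset.sum_insert hx] at h
    rcases hp.2.2 _ _ h with h1 | h2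
    · exact ⟨a, Finset.mem_insert_self _ _, h1⟩
    · obtain ⟨i, hi, hfi⟩ := ih h2
      exact ⟨i, Finset.mem_insert_of_mem hi, hfi⟩

lemma specB_finite (M : Type*) [Binoid M] (hfg : IsFG M) : Finite (SpecB M) := by
  obtain ⟨s, hs⟩ := hfg
  have key : ∀ a b : SpecB M,
      ({x : {y // y ∈ s} | (x : M) ∈ a.1} = {x : {y // y ∈ s} | (x : M) ∈ b.1}) →
      a.1 ⊆ b.1 := by
    intro a b hab m hm
    have hmcl : m ∈ AddSubmonoid.closure (s : Set M) := hs ▸ AddSubmonoid.mem_top m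
    induction hmcl using AddSubmonoid.closure_induction with
    | mem x hx =>
      have h2 : (⟨x, hx⟩ : {y // y ∈ s}) ∈ {x : {y // y ∈ s} | (x : M) ∈ a.1} := hm
      rw [hab] at h2
      exact h2
    | zero => exact absurd hm (Binoid.zero_not_mem_prime a.2)
    | add x y hx hy ihx ihy =>
      rcases a.2.2.2 _ _ hm with h | h
      · exact b.2.1.2 x (ihx h) y
      · rw [add_comm]
        exact b.2.1.2 y (ihy h) x
  have hinj : Function.Injective
      (fun p : SpecB M => {x : {y // y ∈ s} | (x : M) ∈ p.1}) := by
    intro a b hab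
    have h1 := key a b hab
    have h2 := key b a hab.symm
    exact Subtype.ext (Set.Subset.antisymm h1 h2)
  exact Finite.of_injective _ hinj

lemma closed_part (M : Type*) [Binoid M] (hfg : IsFG M) (S : Set (SpecB M)) :
    (∃ A : Set M, S = {p : SpecB M | A ⊆ p.1}) ↔
      ∀ p ∈ S, ∀ q : SpecB M, p.1 ⊆ q.1 → q ∈ S := by
  classical
  constructor
  · rintro ⟨A, rfl⟩ p hp q hpq
    exact Set.Subset.trans hp hpq
  · intro hS
    rcases S.eq_empty_or_nonempty with rfl | hne
    · refine ⟨Set.univ, ?_⟩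
      ext p
      simp only [Set.mem_empty_iff_false, Set.mem_setOf_eq, false_iff]
      intro h
      exact p.2.2.1 (Set.eq_univ_of_univ_subset h)
    · have hfin : Finite (SpecB M) := specB_finite M hfg
      have hSfin : S.Finite := Set.toFinite S
      refine ⟨⋂ p ∈ S, p.1, ?_⟩
      ext q
      simp only [Set.mem_setOf_eq]
      constructor
      · intro hq
        exact Set.biInter_subset_of_mem hq
      · intro hA
        by_contra hqS
        have hx : ∀ p : SpecB M, ∃ x : M, p ∈ S → x ∈ p.1 ∧ x ∉ q.1 := by
          intro p
          by_cases hp : p ∈ S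
          · have hns : ¬ p.1 ⊆ q.1 := fun hc => hqS (hS p hp q hc)
            obtain ⟨x, hx1, hx2⟩ := Set.not_subset.mp hns
            exact ⟨x, fun _ => ⟨hx1, hx2⟩⟩
          · exact ⟨0, fun h => absurd h hp⟩
        choose f hf using hx
        set T := hSfin.toFinset with hT
        have hsum_mem : ∀ p ∈ S, (∑ r ∈ T, f r) ∈ p.1 := by
          intro p hp
          have hpT : p ∈ T := hSfin.mem_toFinset.mpr hp
          rw [← Finset.add_sum_erase T f hpT]
          exact p.2.1.2 _ ((hf p hp).1) _
        have hsq : (∑ r ∈ T, f r) ∈ q.1 := by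
          apply hA
          exact Set.mem_biInter fun p hp => hsum_mem p hp
        obtain ⟨r, hrT, hrq⟩ := Binoid.sum_mem_prime q.2 T f hsq
        exact (hf r (hSfin.mem_toFinset.mp hrT)).2 hrq

end Aux

/-- A subset `S` of `Spec M` is Zariski closed (i.e. of the form `V(A) = {p : A ⊆ p}`) if and
only if it is closed under supersets within `Spec M`; and `S` is Zariski open (the complement of
some `V(A)`) if and only if it is closed under subsets within `Spec M`. -/
theorem zariski_closed_iff_superset_closed (M : Type*) [Binoid M] (hfg : IsFG M)
    (S : Set (SpecB M)) :
    ((∃ A : Set M, S = {p : SpecB M | A ⊆ p.1}) ↔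
      ∀ p ∈ S, ∀ q : SpecB M, p.1 ⊆ q.1 → q ∈ S) ∧
    ((∃ A : Set M, S = {p : SpecB M | ¬ A ⊆ p.1}) ↔
      ∀ p ∈ S, ∀ q : SpecB M, q.1 ⊆ p.1 → q ∈ S) := by
  refine ⟨closed_part M hfg S, ?_⟩
  constructor
  · rintro ⟨A, rfl⟩ p hp q hqp
    exact fun h => hp (h.trans hqp)
  · intro hS
    have hcompl : ∀ p ∈ Sᶜ, ∀ q : SpecB M, p.1 ⊆ q.1 → q ∈ Sᶜ := by
      intro p hp q hpq hq
      exact hp (hS q hq p hpq)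
    obtain ⟨A, hA⟩ := (closed_part M hfg Sᶜ).mpr hcompl
    refine ⟨A, ?_⟩
    ext p
    constructor
    · intro hp hsub
      have : p ∈ Sᶜ := hA ▸ hsub
      exact this hp
    · intro hp
      by_contra hpS
      have : p ∈ Sᶜ := hpS
      rw [hA] at this
      exact hp this
end

section
/- Let R be a commutative ring and A, B ideals of R with A ∩ B = 0. Then the sequence of unit groups 1 → R* → (R/A)* × (R/B)* → (R/(A+B))* is exact, where the first map is f ↦ (f mod A, f mod B) and the second is (g, h) ↦ g·h⁻¹; moreover if R is local the second map is surjective. More precisely, a pair (g, h) of units agreeing modulo A + B lifts to a unit of the localization R_P at every prime P, giving a short exact sequence of sheaves 1 → O*_X → i_*O*_Y ⊕ i_*O*_Z → i_*O*_{Y∩Z} → 1 on X = Spec R with Y = Spec R/A, Z = Spec R/B. -/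
open Ideal

/-- In a local ring, if `x` maps to a unit in `R ⧸ A` and `x` is not a unit, then `A = ⊤`. -/
private lemma aux_eq_top {R : Type*} [CommRing R] [IsLocalRing R] {A : Ideal R} {x : R}
    (hx : ¬ IsUnit x) (hu : IsUnit (Ideal.Quotient.mk A x)) : A = ⊤ := by
  obtain ⟨v, hv⟩ := hu
  obtain ⟨z, hz⟩ := Ideal.Quotient.mk_surjective (↑v⁻¹ : R ⧸ A)
  have h1 : Ideal.Quotient.mk A (x * z) = 1 := by
    rw [_root_.map_mul, ← hv, hz, Units.mul_inv]
  have hmem : (1 : R) - x * z ∈ A := by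
    have := (Ideal.Quotient.eq).mp h1.symm
    simpa using this
  have hxz : ¬ IsUnit (x * z) := fun h => hx (isUnit_of_mul_isUnit_left h)
  have hunit : IsUnit ((1 : R) - x * z) :=
    IsLocalRing.isUnit_one_sub_self_of_mem_nonunits _ hxz
  exact Ideal.eq_top_of_isUnit_mem A hmem hunit

/-- **Units of a ring glued from two closed pieces.**
Let `R` be a commutative ring and `A, B` ideals with `A ∩ B = 0` (so
`Spec R = Spec R/A ∪ Spec R/B`).  Then the sequence of unit groups
`1 → R* → (R/A)* × (R/B)* → (R/(A+B))*` is exact, where the first map is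
`f ↦ (f mod A, f mod B)` and the second is `(g, h) ↦ g·h⁻¹`:
the first map is injective, the composite is trivial, and — if `R` is local (as is the case
for each localization `R_P` at a prime, which is what yields the short exact sequence of
sheaves `1 → O*_X → i_*O*_Y ⊕ i_*O*_Z → i_*O*_{Y∩Z} → 1`) — a pair `(g, h)` of units
agreeing modulo `A + B` lifts to a unit of `R`, and the second map is surjective. -/
theorem units_sequence_of_trivial_intersection (R : Type*) [CommRing R]
    (A B : Ideal R) (hAB : A ⊓ B = ⊥) :
    Function.Injective (fun f : Rˣ =>
      (Units.map (Ideal.Quotient.mk A).toMonoidHom f,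
       Units.map (Ideal.Quotient.mk B).toMonoidHom f)) ∧
    (∀ f : Rˣ,
      Units.map (Ideal.Quotient.factor (le_sup_left : A ≤ A + B)).toMonoidHom
          (Units.map (Ideal.Quotient.mk A).toMonoidHom f) *
        (Units.map (Ideal.Quotient.factor (le_sup_right : B ≤ A + B)).toMonoidHom
          (Units.map (Ideal.Quotient.mk B).toMonoidHom f))⁻¹ = 1) ∧
    (IsLocalRing R →
      ∀ (g : (R ⧸ A)ˣ) (h : (R ⧸ B)ˣ),
        Units.map (Ideal.Quotient.factor (le_sup_left : A ≤ A + B)).toMonoidHom g =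
          Units.map (Ideal.Quotient.factor (le_sup_right : B ≤ A + B)).toMonoidHom h →
        ∃ f : Rˣ, Units.map (Ideal.Quotient.mk A).toMonoidHom f = g ∧
          Units.map (Ideal.Quotient.mk B).toMonoidHom f = h) ∧
    (IsLocalRing R →
      ∀ u : (R ⧸ (A + B))ˣ, ∃ (g : (R ⧸ A)ˣ) (h : (R ⧸ B)ˣ),
        Units.map (Ideal.Quotient.factor (le_sup_left : A ≤ A + B)).toMonoidHom g *
          (Units.map (Ideal.Quotient.factor (le_sup_right : B ≤ A + B)).toMonoidHom h)⁻¹ = u) := by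
  refine ⟨?_, ?_, ?_, ?_⟩
  · -- injectivity
    intro f f' hff'
    simp only [Prod.mk.injEq] at hff'
    obtain ⟨hA, hB⟩ := hff'
    have hA' : Ideal.Quotient.mk A (f : R) = Ideal.Quotient.mk A (f' : R) :=
      congrArg Units.val hA
    have hB' : Ideal.Quotient.mk B (f : R) = Ideal.Quotient.mk B (f' : R) :=
      congrArg Units.val hB
    have hmA : (f : R) - (f' : R) ∈ A := Ideal.Quotient.eq.mp hA'
    have hmB : (f : R) - (f' : R) ∈ B := Ideal.Quotient.eq.mp hB'
    have : (f : R) - (f' : R) ∈ A ⊓ B := ⟨hmA, hmB⟩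
    rw [hAB] at this
    exact Units.ext (sub_eq_zero.mp ((Ideal.mem_bot).mp this))
  · -- composite trivial
    intro f
    have : Units.map (Ideal.Quotient.factor (le_sup_left : A ≤ A + B)).toMonoidHom
        (Units.map (Ideal.Quotient.mk A).toMonoidHom f) =
      Units.map (Ideal.Quotient.factor (le_sup_right : B ≤ A + B)).toMonoidHom
        (Units.map (Ideal.Quotient.mk B).toMonoidHom f) := by
      apply Units.ext
      simp [Ideal.Quotient.factor_mk]
    rw [this, mul_inv_cancel]
  · -- middle exactness for local rings
    intro hloc g h hgh
    obtain ⟨x, hx⟩ := Ideal.Quotient.mk_surjective (g : R ⧸ A)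
    obtain ⟨y, hy⟩ := Ideal.Quotient.mk_surjective (h : R ⧸ B)
    have hval : Ideal.Quotient.mk (A + B) x = Ideal.Quotient.mk (A + B) y := by
      have := congrArg Units.val hgh
      simpa [← hx, ← hy, Ideal.Quotient.factor_mk] using this
    have hxy : x - y ∈ A + B := Ideal.Quotient.eq.mp hval
    rw [Ideal.add_eq_sup] at hxy
    obtain ⟨a, haA, b, hbB, hab⟩ := Submodule.mem_sup.mp hxy
    set f0 : R := x - a with hf0
    have hf0A : Ideal.Quotient.mk A f0 = (g : R ⧸ A) := by
      rw [← hx]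
      refine Ideal.Quotient.eq.mpr ?_
      have : f0 - x = -a := by rw [hf0]; ring
      rw [this]; exact A.neg_mem haA
    have hf0B : Ideal.Quotient.mk B f0 = (h : R ⧸ B) := by
      rw [← hy]
      refine Ideal.Quotient.eq.mpr ?_
      have heq : f0 - y = b := by rw [hf0]; linear_combination -hab
      rw [heq]; exact hbB
    have hunit : IsUnit f0 := by
      by_contra hnf
      have hA : A = ⊤ := aux_eq_top hnf (hf0A ▸ g.isUnit)
      have hB : B = ⊤ := aux_eq_top hnf (hf0B ▸ h.isUnit)
      have : (⊥ : Ideal R) = ⊤ := by rw [← hAB, hA, hB]; simp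
      have h1 : (1 : R) ∈ (⊥ : Ideal R) := this ▸ Submodule.mem_top
      have h10 : (1 : R) = 0 := (Ideal.mem_bot).mp h1
      exact hnf (by rw [show f0 = f0 * 1 by ring, h10, mul_zero]; exact isUnit_zero_iff.mpr h10.symm)
    obtain ⟨v, hv⟩ := hunit
    refine ⟨v, Units.ext ?_, Units.ext ?_⟩
    · simpa [hv] using hf0A
    · simpa [hv] using hf0B
  · -- surjectivity for local rings
    intro hloc u
    obtain ⟨x, hx⟩ := Ideal.Quotient.mk_surjective (u : R ⧸ (A + B))
    by_cases hxu : IsUnit x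
    · obtain ⟨v, hv⟩ := hxu
      refine ⟨Units.map (Ideal.Quotient.mk A).toMonoidHom v, 1, Units.ext ?_⟩
      simp only [_root_.map_one, inv_one, Units.val_mul, Units.val_one, mul_one,
        Units.coe_map, MonoidHom.coe_coe, hv]
      exact (Ideal.Quotient.factor_mk (le_sup_left : A ≤ A + B) x).trans hx
    · -- then A + B = ⊤ and everything is trivial
      obtain ⟨y, hy⟩ := Ideal.Quotient.mk_surjective ((u⁻¹ : (R ⧸ (A + B))ˣ) : R ⧸ (A + B))
      have h1 : Ideal.Quotient.mk (A + B) (x * y) = 1 := by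
        rw [_root_.map_mul, hx, hy, Units.mul_inv]
      have hmem : (1 : R) - x * y ∈ A + B := by
        have := (Ideal.Quotient.eq).mp h1.symm
        simpa using this
      have hxy : ¬ IsUnit (x * y) := fun hh => hxu (isUnit_of_mul_isUnit_left hh)
      have hunit : IsUnit ((1 : R) - x * y) :=
        IsLocalRing.isUnit_one_sub_self_of_mem_nonunits _ hxy
      have htop : A + B = ⊤ := Ideal.eq_top_of_isUnit_mem _ hmem hunit
      haveI : Subsingleton (R ⧸ (A + B)) := by
        rw [htop]; exact Ideal.Quotient.subsingleton_iff.mpr rfl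
      exact ⟨1, 1, Units.ext (Subsingleton.elim _ _)⟩
end
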